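/- Let d ≥ 2 and let p_1, …, p_{d+1} ∈ ℝ^d be unit vectors. Then Σ_{1 ≤ i < j ≤ d+1} ⟨p_i, p_j⟩² ≥ (d+1)/(2d), with equality attained when ⟨p_i, p_j⟩ = −1/d for all i ≠ j. -/

import Mathlib

lemma sum_swap4' {n m : ℕ} (f : Fin n → Fin n → Fin m → Fin m → ℝ) :
    ∑ i, ∑ j, ∑ k, ∑ l, f i j k l = ∑ k, ∑ l, ∑ i, ∑ j, f i j k l := by
  have h1 : ∑ i, ∑ j, ∑ k, ∑ l, f i j k l = ∑ i, ∑ k, ∑ j, ∑ l, f i j k l :=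
    Finset.sum_congr rfl fun i _ => Finset.sum_comm
  have h2 : ∑ i, ∑ k, ∑ j, ∑ l, f i j k l = ∑ k, ∑ i, ∑ j, ∑ l, f i j k l :=
    Finset.sum_comm
  have h3 : ∑ k, ∑ i, ∑ j, ∑ l, f i j k l = ∑ k, ∑ i, ∑ l, ∑ j, f i j k l :=
    Finset.sum_congr rfl fun k _ => Finset.sum_congr rfl fun i _ => Finset.sum_comm
  have h4 : ∑ k, ∑ i, ∑ l, ∑ j, f i j k l = ∑ k, ∑ l, ∑ i, ∑ j, f i j k l :=
    Finset.sum_congr rfl fun k _ => Finset.sum_comm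
  rw [h1, h2, h3, h4]

lemma key_swap_sum {n m : ℕ} (a : Fin n → Fin m → ℝ) :
    ∑ i, ∑ j, (∑ k, a i k * a j k)^2 = ∑ k, ∑ l, (∑ i, a i k * a i l)^2 := by
  simp_rw [sq, Finset.sum_mul_sum]
  rw [sum_swap4' (fun i j k l => (a i k * a j k) * (a i l * a j l))]
  refine Finset.sum_congr rfl fun k _ => Finset.sum_congr rfl fun l _ =>
    Finset.sum_congr rfl fun i _ => Finset.sum_congr rfl fun j _ => by ring

/-- Let `d ≥ 2` and let `p₁, …, p_{d+1} ∈ ℝ^d` be unit vectors. Then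
`∑_{i<j} ⟨pᵢ, pⱼ⟩² ≥ (d+1)/(2d)`, and equality is attained when `⟨pᵢ, pⱼ⟩ = -1/d` for all
`i ≠ j`. -/
theorem sum_sq_inner_ge_of_unit_vectors (d : ℕ) (hd : 2 ≤ d)
    (p : Fin (d + 1) → EuclideanSpace ℝ (Fin d)) (hp : ∀ i, ‖p i‖ = 1) :
    ((d : ℝ) + 1) / (2 * d) ≤ ∑ i, ∑ j ∈ Finset.Ioi i, (inner ℝ (p i) (p j) : ℝ) ^ 2 ∧
    ((∀ i j, i ≠ j → (inner ℝ (p i) (p j) : ℝ) = -1 / d) →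
      (∑ i, ∑ j ∈ Finset.Ioi i, (inner ℝ (p i) (p j) : ℝ) ^ 2) = ((d : ℝ) + 1) / (2 * d)) := by
  have hd0 : (0:ℝ) < d := by positivity
  set G : Fin (d+1) → Fin (d+1) → ℝ := fun i j => (inner ℝ (p i) (p j) : ℝ) with hGdef
  set T : ℝ := ∑ i, ∑ j ∈ Finset.Ioi i, G i j ^ 2 with hT
  have hGsymm : ∀ i j, G i j = G j i := fun i j => real_inner_comm _ _
  have hGii : ∀ i, G i i = 1 := by
    intro i
    show (inner ℝ (p i) (p i) : ℝ) = 1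
    rw [real_inner_self_eq_norm_sq, hp i]
    norm_num
  -- off-diagonal decomposition: 2T = sum over complements
  have hk := Finset.sum_sum_Ioi_add_eq_sum_sum_off_diag (f := fun i j => G i j ^ 2)
  simp only [Finset.compl_singleton] at hk
  have h2 : ∑ i, ∑ j ∈ Finset.Ioi i, (G j i ^ 2 + G i j ^ 2) = 2 * T := by
    rw [hT, Finset.mul_sum]
    refine Finset.sum_congr rfl fun i _ => ?_
    rw [Finset.mul_sum]
    refine Finset.sum_congr rfl fun j _ => by rw [hGsymm j i]; ring
  have hod := hk.symm.trans h2
  have hinst : (fun (a b : Fin (d+1)) => LinearOrder.toDecidableEq a b)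
      = instDecidableEqFin (d+1) := Subsingleton.elim _ _
  rw [hinst] at hod
  -- full double sum
  have hSsplit : ∑ i, ∑ j, G i j ^ 2 = ((d:ℝ) + 1) + 2 * T := by
    rw [← hod]
    rw [show ((d:ℝ) + 1) = ∑ i : Fin (d+1), G i i ^ 2 by simp [hGii]]
    rw [← Finset.sum_add_distrib]
    refine Finset.sum_congr rfl fun i _ => ?_
    calc ∑ j, G i j ^ 2 = ∑ j, G j i ^ 2 :=
          Finset.sum_congr rfl fun j _ => by rw [hGsymm i j]
      _ = G i i ^ 2 + ∑ j ∈ Finset.univ.erase i, G j i ^ 2 :=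
          (Finset.add_sum_erase _ _ (Finset.mem_univ i)).symm
  constructor
  · -- inequality
    have hGinner : ∀ i j, G i j = ∑ k, p i k * p j k := by
      intro i j
      simp [hGdef, PiLp.inner_apply, RCLike.inner_apply, mul_comm]
    have hnorm : ∀ i, ∑ k, p i k * p i k = 1 := by
      intro i; rw [← hGinner i i, hGii]
    set M : Fin d → Fin d → ℝ := fun k l => ∑ i, p i k * p i l with hM
    have htr : ∑ k, M k k = (d:ℝ) + 1 := by
      rw [hM]
      rw [Finset.sum_comm]
      simp [hnorm]
    have hCS : ((d:ℝ) + 1)^2 ≤ (d:ℝ) * ∑ k, (M k k)^2 := by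
      have := sq_sum_le_card_mul_sum_sq (s := (Finset.univ : Finset (Fin d)))
        (f := fun k => M k k)
      rw [htr] at this
      simpa using this
    have hdiag : ∑ k, (M k k)^2 ≤ ∑ k, ∑ l, (M k l)^2 := by
      refine Finset.sum_le_sum fun k _ => ?_
      exact Finset.single_le_sum (fun l _ => sq_nonneg (M k l)) (Finset.mem_univ k)
    have hkey : ∑ k, ∑ l, (M k l)^2 = ∑ i, ∑ j, G i j ^ 2 := by
      rw [← key_swap_sum (fun i k => p i k)]
      exact Finset.sum_congr rfl fun i _ => Finset.sum_congr rfl fun j _ => by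
        rw [hGinner i j]
    have hbig : ((d:ℝ) + 1)^2 ≤ (d:ℝ) * (((d:ℝ) + 1) + 2 * T) := by
      calc ((d:ℝ) + 1)^2 ≤ (d:ℝ) * ∑ k, (M k k)^2 := hCS
        _ ≤ (d:ℝ) * ∑ k, ∑ l, (M k l)^2 := by
            exact mul_le_mul_of_nonneg_left hdiag hd0.le
        _ = (d:ℝ) * (((d:ℝ) + 1) + 2 * T) := by rw [hkey, hSsplit]
    rw [div_le_iff₀ (by positivity)]
    nlinarith [hbig]
  · -- equality
    intro h
    have hone : ∀ i j : Fin (d+1), j ≠ i → G j i ^ 2 = 1 / (d:ℝ)^2 := by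
      intro i j hne
      have hji : G j i = -1/d := h j i hne
      rw [hji, div_pow]
      norm_num
    have h2T : 2 * T = ((d:ℝ) + 1) * ((d:ℝ) * (1 / (d:ℝ)^2)) := by
      rw [← hod]
      refine Eq.trans (Finset.sum_congr rfl fun i _ => Finset.sum_congr rfl
        fun j hj => hone i j (Finset.ne_of_mem_erase hj)) ?_
      simp only [Finset.sum_const, Finset.card_erase_of_mem (Finset.mem_univ _),
        Fintype.card_fin, Nat.add_sub_cancel, nsmul_eq_mul, Finset.card_univ]
      push_cast
      ring
    have hTeq : T = ((d:ℝ) + 1) / (2 * d) := by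
      rw [eq_div_iff (by positivity : (2*(d:ℝ)) ≠ 0)]
      field_simp at h2T
      nlinarith [h2T, hd0]
    exact hTeq
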